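/- Let G = (V,E) be a finite connected graph, p > 1 with dual exponent q, and A,B ⊆ V nonempty disjoint. Let Û : V → ℝ be the capacity-minimizing potential (Û = 0 on A, Û = 1 on B, minimizing ∑_{{x,y}∈E} |Û(x)−Û(y)|^p). Then the optimal Θ(A,B)-admissible density is ρ̂({x,y}) = |Û(x)−Û(y)|, and the energy-minimizing unit flow from A to B is F(x,y) = Mod_p(Θ(A,B),G)^{−1} · sgn(Û(y)−Û(x))·|Û(y)−Û(x)|^{p−1} for all {x,y} ∈ E. -/

import Mathlib

open Classical Real

noncomputable section

namespace Paper

variable {V : Type*} [Fintype V] [DecidableEq V]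

/-- A path in a graph `G`, packaged together with its endpoints. -/
def GPath (G : SimpleGraph V) : Type _ := Σ u v : V, G.Walk u v

/-- The `ρ`-length of a path: the sum of `ρ` over its edges. -/
def lenρ (G : SimpleGraph V) (ρ : Sym2 V → ℝ) (θ : GPath G) : ℝ :=
  (θ.2.2.edges.map ρ).sum

/-- A density on a graph: nonnegative and supported on the edge set. -/
def IsDensity (G : SimpleGraph V) (ρ : Sym2 V → ℝ) : Prop :=
  (∀ e, 0 ≤ ρ e) ∧ ∀ e, e ∉ G.edgeSet → ρ e = 0

/-- `ρ` is admissible for the path family `Θ`. -/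
def Admissible (G : SimpleGraph V) (Θ : Set (GPath G)) (ρ : Sym2 V → ℝ) : Prop :=
  (∀ e, 0 ≤ ρ e) ∧ ∀ θ ∈ Θ, 1 ≤ lenρ G ρ θ

/-- The `p`-mass of a density: `∑_{e ∈ E} ρ(e)^p`. -/
def massE (G : SimpleGraph V) (p : ℝ) (ρ : Sym2 V → ℝ) : ℝ :=
  ∑ e : Sym2 V, if e ∈ G.edgeSet then ρ e ^ p else 0

/-- The edge `p`-modulus of a family of paths. -/
def ModE (G : SimpleGraph V) (p : ℝ) (Θ : Set (GPath G)) : ℝ :=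
  sInf {m | ∃ ρ, Admissible G Θ ρ ∧ massE G p ρ = m}

/-- The optimal admissible density for a path family. -/
def IsOptDensityE (G : SimpleGraph V) (p : ℝ) (Θ : Set (GPath G)) (ρ : Sym2 V → ℝ) : Prop :=
  IsDensity G ρ ∧ Admissible G Θ ρ ∧
    ∀ σ, IsDensity G σ → Admissible G Θ σ → massE G p ρ ≤ massE G p σ

/-- The family `Θ(A,B)` of paths connecting `A` to `B`. -/
def pathsBetween (G : SimpleGraph V) (A B : Set V) : Set (GPath G) :=
  {θ | θ.1 ∈ A ∧ θ.2.1 ∈ B}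

/-- Vertex `p`-modulus of a family of vertex sets. -/
def ModV (p : ℝ) (Θh : Set (Finset V)) : ℝ :=
  sInf {m | ∃ ρ : V → ℝ, (∀ v, 0 ≤ ρ v) ∧ (∀ s ∈ Θh, 1 ≤ ∑ v ∈ s, ρ v) ∧
    (∑ v : V, ρ v ^ p) = m}

/-- Maximum degree of a graph. -/
def maxDeg (G : SimpleGraph V) : ℕ :=
  Finset.univ.sup fun v : V => Nat.card {u // G.Adj v u}

/-- `|U(x) − U(y)|` as a function on unordered pairs. -/
def ediff (U : V → ℝ) : Sym2 V → ℝ :=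
  Sym2.lift ⟨fun x y => |U x - U y|, fun x y => abs_sub_comm (U x) (U y)⟩

/-- The `p`-energy `∑_{{x,y}∈E} |U(x)−U(y)|^p` of a potential. -/
def capMass (G : SimpleGraph V) (p : ℝ) (U : V → ℝ) : ℝ :=
  ∑ e : Sym2 V, if e ∈ G.edgeSet then ediff U e ^ p else 0

/-- The `p`-capacity from `A` to `B`. -/
def CapE (G : SimpleGraph V) (p : ℝ) (A B : Finset V) : ℝ :=
  sInf {m | ∃ U : V → ℝ, (∀ a ∈ A, U a = 0) ∧ (∀ b ∈ B, U b = 1) ∧ capMass G p U = m}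

/-- `U` is `p`-harmonic in `A`. -/
def pHarmOn (G : SimpleGraph V) (p : ℝ) (U : V → ℝ) (A : Set V) : Prop :=
  ∀ x ∈ A, (∑ y : V,
    if G.Adj x y then Real.sign (U x - U y) * |U x - U y| ^ (p - 1) else 0) = 0

/-- The (outer) vertex boundary of `A`. -/
def vBoundary (G : SimpleGraph V) (A : Set V) : Set V :=
  {x | x ∉ A ∧ ∃ y ∈ A, G.Adj x y}

/-- A flow from `A` to `B`: antisymmetric, supported on edges, divergence free off `A ∪ B`. -/
def IsFlow (G : SimpleGraph V) (A B : Finset V) (F : V → V → ℝ) : Prop :=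
  (∀ x y, F x y = - F y x) ∧ (∀ x y, ¬ G.Adj x y → F x y = 0) ∧
  (∀ x, x ∉ A → x ∉ B → (∑ y : V, F x y) = 0)

/-- The total flow out of `A`. -/
def totalFlow (A : Finset V) (F : V → V → ℝ) : ℝ := ∑ x ∈ A, ∑ y : V, F x y

/-- `|F(e)|` as a function on unordered pairs. -/
def flowAbs (F : V → V → ℝ) : Sym2 V → ℝ :=
  Sym2.lift ⟨fun x y => |F x y| ⊔ |F y x|, fun x y => sup_comm _ _⟩

/-- The `q`-energy of a flow. -/
def energyQ (G : SimpleGraph V) (q : ℝ) (F : V → V → ℝ) : ℝ :=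
  ∑ e : Sym2 V, if e ∈ G.edgeSet then flowAbs F e ^ q else 0

/-- The minimal `q`-energy among unit flows from `A` to `B`. -/
def EminQ (G : SimpleGraph V) (q : ℝ) (A B : Finset V) : ℝ :=
  sInf {m | ∃ F, IsFlow G A B F ∧ totalFlow A F = 1 ∧ energyQ G q F = m}

end Paper

namespace OhmAux
open Paper Finset

lemma rsign_mul_abs (x : ℝ) : x * Real.sign x = |x| := by
  rcases lt_trichotomy x 0 with h|h|h
  · rw [Real.sign_of_neg h, abs_of_neg h]; ring
  · simp [h]
  · rw [Real.sign_of_pos h, abs_of_pos h]; ring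

lemma sign_mul_abs' (x : ℝ) : Real.sign x * |x| = x := by
  rcases lt_trichotomy x 0 with h|h|h
  · rw [Real.sign_of_neg h, abs_of_neg h]; ring
  · simp [h]
  · rw [Real.sign_of_pos h, abs_of_pos h]; ring

lemma abs_sign_mul {z : ℝ} {r : ℝ} (hr : r ≠ 0) : |Real.sign z * |z| ^ r| = |z| ^ r := by
  rcases eq_or_ne z 0 with rfl | hz
  · simp [Real.sign_zero, Real.zero_rpow hr]
  · rcases (Real.sign_apply_eq_of_ne_zero z hz) with h | h <;>
      rw [h] <;> simp [abs_of_nonneg (Real.rpow_nonneg (abs_nonneg z) r)]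

lemma abs_mul_abs_rpow (x : ℝ) {r : ℝ} (hr : 0 < r) : |x| * |x| ^ r = |x| ^ (r + 1) := by
  rcases eq_or_ne x 0 with rfl | hx
  · simp [Real.zero_rpow hr.ne', Real.zero_rpow (by positivity : r + 1 ≠ 0)]
  · rw [Real.rpow_add_one (abs_ne_zero.mpr hx) r]; ring

lemma myDeriv {p : ℝ} (hp : 1 < p) (c : ℝ) :
    HasDerivAt (fun s : ℝ => |s| ^ p) (p * Real.sign c * |c| ^ (p - 1)) c := by
  have h := hasDerivAt_abs_rpow c hp
  convert h using 1
  rcases eq_or_ne c 0 with rfl | hc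
  · simp [Real.sign_zero]
  · have habs : (0:ℝ) < |c| := abs_pos.mpr hc
    have h1 : |c| ^ (p - 1) = |c| ^ (p - 2) * |c| := by
      rw [← Real.rpow_add_one habs.ne' (p-2)]; ring_nf
    rw [h1]
    calc p * Real.sign c * (|c| ^ (p - 2) * |c|)
        = p * |c| ^ (p - 2) * (Real.sign c * |c|) := by ring
      _ = p * |c| ^ (p - 2) * c := by rw [sign_mul_abs']

lemma myDerivAffine {p : ℝ} (hp : 1 < p) (c a : ℝ) :
    HasDerivAt (fun t : ℝ => |c + a * t| ^ p) (p * Real.sign c * |c| ^ (p - 1) * a) 0 := by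
  have h1 : HasDerivAt (fun t : ℝ => c + a * t) a 0 := by
    simpa using ((hasDerivAt_id (0:ℝ)).const_mul a).const_add c
  have h2 := (myDeriv hp (c + a * 0)).comp 0 h1
  simpa [Function.comp_def] using h2

variable {V : Type*} [Fintype V] [DecidableEq V]

lemma sum_pairs (G : SimpleGraph V) (f : Sym2 V → ℝ) :
    ∑ u : V, ∑ v : V, (if G.Adj u v then f s(u, v) else 0)
      = 2 * ∑ e : Sym2 V, (if e ∈ G.edgeSet then f e else 0) := by
  haveI : Fintype G.edgeSet := Fintype.ofFinite _
  have h1 : ∑ u : V, ∑ v : V, (if G.Adj u v then f s(u, v) else 0)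
      = ∑ p : V × V, (if G.Adj p.1 p.2 then f s(p.1, p.2) else 0) := by
    rw [Fintype.sum_prod_type]
  have h2 : ∑ p : V × V, (if G.Adj p.1 p.2 then f s(p.1, p.2) else 0)
      = ∑ p ∈ univ.filter (fun p : V × V => G.Adj p.1 p.2), f s(p.1, p.2) := by
    rw [sum_filter]
  have h3 : ∑ p ∈ univ.filter (fun p : V × V => G.Adj p.1 p.2), f s(p.1, p.2)
      = ∑ d : G.Dart, f d.edge := by
    refine (Finset.sum_bij' (fun (d : G.Dart) _ => d.toProd)
      (fun p hp => ⟨p, (mem_filter.mp hp).2⟩) ?_ ?_ ?_ ?_ ?_).symm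
    · intro d _; simp [d.adj]
    · intro p hp; simp
    · intro d _; rfl
    · intro p hp; rfl
    · intro d _; rfl
  have h4 : ∑ d : G.Dart, f d.edge = ∑ e ∈ G.edgeFinset, 2 * f e := by
    rw [← Finset.sum_fiberwise_of_maps_to (g := SimpleGraph.Dart.edge) (t := G.edgeFinset)
      (fun d _ => by rw [SimpleGraph.mem_edgeFinset]; exact d.edge_mem)]
    refine Finset.sum_congr rfl fun e he => ?_
    have hcard := G.dart_edge_fiber_card e (SimpleGraph.mem_edgeFinset.mp he)
    have h5 : ∑ d ∈ univ.filter (fun d : G.Dart => d.edge = e), f d.edge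
        = ∑ d ∈ univ.filter (fun d : G.Dart => d.edge = e), f e :=
      Finset.sum_congr rfl fun d hd => by rw [(mem_filter.mp hd).2]
    rw [h5, Finset.sum_const, hcard]
    simp [two_mul]
  have h5 : ∑ e ∈ G.edgeFinset, 2 * f e
      = 2 * ∑ e : Sym2 V, (if e ∈ G.edgeSet then f e else 0) := by
    rw [← Finset.mul_sum]
    congr 1
    rw [← sum_filter]
    refine Finset.sum_congr ?_ (fun _ _ => rfl)
    ext e; simp [SimpleGraph.mem_edgeFinset]
  rw [h1, h2, h3, h4, h5]

lemma ediff_mk (U : V → ℝ) (x y : V) : ediff U s(x, y) = |U x - U y| := rfl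

lemma flowAbs_mk (F : V → V → ℝ) (x y : V) : flowAbs F s(x, y) = |F x y| ⊔ |F y x| := rfl

variable {G : SimpleGraph V}

lemma walk_sum_ge (σ : Sym2 V → ℝ) (W : V → ℝ)
    (hσ : ∀ x y, G.Adj x y → |W x - W y| ≤ σ s(x, y)) {u v : V} (w : G.Walk u v) :
    |W v - W u| ≤ (w.edges.map σ).sum := by
  induction w with
  | nil => simp
  | @cons a b c h w ih =>
    rw [SimpleGraph.Walk.edges_cons, List.map_cons, List.sum_cons]
    calc |W c - W a| ≤ |W c - W b| + |W b - W a| := abs_sub_le _ _ _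
      _ = |W a - W b| + |W c - W b| := by rw [abs_sub_comm (W b) (W a)]; ring
      _ ≤ σ s(a, b) + (w.edges.map σ).sum := add_le_add (hσ a b h) ih

lemma min_one_sub_le {a b c : ℝ} (h2 : a ≤ b + c) (hc : 0 ≤ c) :
    min a 1 - min b 1 ≤ c := by
  rcases le_total b 1 with h | h
  · rw [min_eq_left h]; have := min_le_left a 1; linarith
  · rw [min_eq_right h]; have := min_le_right a 1; linarith

/-- The set of σ-lengths of walks from `A` to `x`. -/
def dset (G : SimpleGraph V) (σ : Sym2 V → ℝ) (A : Finset V) (x : V) : Set ℝ :=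
  {r | ∃ a ∈ A, ∃ w : G.Walk a x, (w.edges.map σ).sum = r}

lemma dset_nonempty (hG : G.Connected) (σ : Sym2 V → ℝ) {A : Finset V} (hA : A.Nonempty)
    (x : V) : (dset G σ A x).Nonempty := by
  obtain ⟨a, ha⟩ := hA
  obtain ⟨w⟩ := hG.preconnected a x
  exact ⟨_, a, ha, w, rfl⟩

lemma dset_bddBelow (σ : Sym2 V → ℝ) (hσ : ∀ e, 0 ≤ σ e) (A : Finset V) (x : V) :
    BddBelow (dset G σ A x) := by
  refine ⟨0, fun r hr => ?_⟩
  obtain ⟨a, _, w, rfl⟩ := hr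
  exact List.sum_nonneg (fun y hy => by
    obtain ⟨e, _, rfl⟩ := List.mem_map.mp hy; exact hσ e)

lemma capMass_nonneg (G : SimpleGraph V) (p : ℝ) (U' : V → ℝ) : 0 ≤ capMass G p U' := by
  refine Finset.sum_nonneg (fun e _ => ?_)
  have hne : 0 ≤ ediff U' e := Sym2.ind (fun x y => abs_nonneg _) e
  split
  · exact Real.rpow_nonneg hne p
  · exact le_rfl

lemma capE_bddBelow (G : SimpleGraph V) (p : ℝ) (A B : Finset V) :
    BddBelow {m | ∃ U' : V → ℝ, (∀ a ∈ A, U' a = 0) ∧ (∀ b ∈ B, U' b = 1) ∧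
      capMass G p U' = m} := by
  refine ⟨0, fun m hm => ?_⟩
  obtain ⟨U', _, _, rfl⟩ := hm
  exact capMass_nonneg G p U'

lemma lower_bound_capE (hG : G.Connected) {p : ℝ} (hp : 1 < p)
    {A B : Finset V} (hA : A.Nonempty) (σ : Sym2 V → ℝ)
    (hadm : Admissible G (pathsBetween G (↑A : Set V) (↑B : Set V)) σ) :
    CapE G p A B ≤ massE G p σ := by
  classical
  obtain ⟨hσ0, hσ1⟩ := hadm
  set d : V → ℝ := fun x => sInf (dset G σ A x) with hd
  set W : V → ℝ := fun x => min (d x) 1 with hW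
  have hne : ∀ x, (dset G σ A x).Nonempty := dset_nonempty hG σ hA
  have hbdd : ∀ x, BddBelow (dset G σ A x) := dset_bddBelow σ hσ0 A
  have hd0 : ∀ x, 0 ≤ d x := fun x => le_csInf (hne x) (fun r hr => by
    obtain ⟨a, _, w, rfl⟩ := hr
    exact List.sum_nonneg (fun y hy => by
      obtain ⟨e, _, rfl⟩ := List.mem_map.mp hy; exact hσ0 e))
  have hdA : ∀ a ∈ A, d a = 0 := by
    intro a ha
    refine le_antisymm ?_ (hd0 a)
    exact csInf_le (hbdd a) ⟨a, ha, SimpleGraph.Walk.nil, by simp⟩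
  have hdB : ∀ b ∈ B, 1 ≤ d b := by
    intro b hb
    refine le_csInf (hne b) (fun r hr => ?_)
    obtain ⟨a, ha, w, rfl⟩ := hr
    exact hσ1 ⟨a, b, w⟩ ⟨ha, hb⟩
  have hlip : ∀ x y, G.Adj x y → d y ≤ d x + σ s(x, y) := by
    intro x y hxy
    rw [← sub_le_iff_le_add]
    refine le_csInf (hne x) (fun r hr => ?_)
    obtain ⟨a, ha, w, rfl⟩ := hr
    rw [sub_le_iff_le_add]
    refine csInf_le (hbdd y) ⟨a, ha, w.concat hxy, ?_⟩
    rw [SimpleGraph.Walk.edges_concat, List.map_concat, List.sum_concat]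
  have hWlip : ∀ x y, G.Adj x y → |W x - W y| ≤ σ s(x, y) := by
    intro x y hxy
    have h1 : d y ≤ d x + σ s(x, y) := hlip x y hxy
    have h2 : d x ≤ d y + σ s(x, y) := by
      have := hlip y x hxy.symm; rwa [Sym2.eq_swap] at this
    rw [abs_sub_le_iff]
    exact ⟨min_one_sub_le h2 (hσ0 _), min_one_sub_le h1 (hσ0 _)⟩
  have hWA : ∀ a ∈ A, W a = 0 := by
    intro a ha; simp [hW, hdA a ha]
  have hWB : ∀ b ∈ B, W b = 1 := by
    intro b hb; simp [hW, min_eq_right (hdB b hb)]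
  have hcap : capMass G p W ≤ massE G p σ := by
    refine Finset.sum_le_sum (fun e _ => ?_)
    split
    · next hmem =>
      refine Real.rpow_le_rpow (Sym2.ind (fun x y => abs_nonneg _) e) ?_ (by linarith)
      revert hmem
      refine Sym2.ind (fun x y hmem => ?_) e
      rw [SimpleGraph.mem_edgeSet] at hmem
      exact hWlip x y hmem
    · exact le_rfl
  refine le_trans (csInf_le (capE_bddBelow G p A B) ⟨W, hWA, hWB, rfl⟩) hcap

lemma ediff_nonneg (U : V → ℝ) (e : Sym2 V) : 0 ≤ ediff U e :=
  Sym2.ind (fun x y => abs_nonneg _) e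

lemma rhohat_admissible {A B : Finset V} (U : V → ℝ)
    (hU0 : ∀ a ∈ A, U a = 0) (hU1 : ∀ b ∈ B, U b = 1) :
    Admissible G (pathsBetween G (↑A : Set V) (↑B : Set V))
      (fun e => if e ∈ G.edgeSet then ediff U e else 0) := by
  constructor
  · intro e; by_cases h : e ∈ G.edgeSet <;> simp [h, ediff_nonneg U e]
  · rintro ⟨u, v, w⟩ ⟨hu, hv⟩
    have h1 : |U v - U u| = 1 := by
      rw [hU1 v hv, hU0 u hu]; norm_num
    have h2 := walk_sum_ge (fun e => if e ∈ G.edgeSet then ediff U e else 0) U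
      (fun x y hxy => by
        simp only [if_pos (G.mem_edgeSet.mpr hxy)]
        exact le_of_eq (ediff_mk U x y).symm) w
    rw [h1] at h2
    exact h2

lemma massE_rhohat (G : SimpleGraph V) (p : ℝ) (U : V → ℝ) :
    massE G p (fun e => if e ∈ G.edgeSet then ediff U e else 0) = capMass G p U := by
  refine Finset.sum_congr rfl (fun e _ => ?_)
  by_cases h : e ∈ G.edgeSet <;> simp [h]

lemma massE_nonneg (G : SimpleGraph V) {p : ℝ} (hp : 1 < p) (σ : Sym2 V → ℝ)
    (hσ : ∀ e, 0 ≤ σ e) : 0 ≤ massE G p σ := by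
  refine Finset.sum_nonneg (fun e _ => ?_)
  split
  · exact Real.rpow_nonneg (hσ e) p
  · exact le_rfl

lemma modE_bddBelow (G : SimpleGraph V) {p : ℝ} (hp : 1 < p) (Θ : Set (GPath G)) :
    BddBelow {m | ∃ ρ, Admissible G Θ ρ ∧ massE G p ρ = m} := by
  refine ⟨0, fun m hm => ?_⟩
  obtain ⟨σ, hadm, rfl⟩ := hm
  exact massE_nonneg G hp σ hadm.1

lemma modE_eq (hG : G.Connected) {p : ℝ} (hp : 1 < p) {A B : Finset V}
    (hA : A.Nonempty) (U : V → ℝ)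
    (hU0 : ∀ a ∈ A, U a = 0) (hU1 : ∀ b ∈ B, U b = 1)
    (hUmin : capMass G p U = CapE G p A B) :
    ModE G p (pathsBetween G (↑A : Set V) (↑B : Set V)) = capMass G p U := by
  refine le_antisymm ?_ ?_
  · exact csInf_le (modE_bddBelow G hp _)
      ⟨_, rhohat_admissible U hU0 hU1, massE_rhohat G p U⟩
  · refine le_csInf ⟨_, _, rhohat_admissible U hU0 hU1, rfl⟩ ?_
    rintro m ⟨σ, hadm, rfl⟩
    rw [hUmin]
    exact lower_bound_capE hG hp hA σ hadm

lemma capMass_pos (hG : G.Connected) {p : ℝ} (hp : 1 < p) {A B : Finset V}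
    (hA : A.Nonempty) (hB : B.Nonempty) (hAB : Disjoint A B) (U : V → ℝ)
    (hU0 : ∀ a ∈ A, U a = 0) (hU1 : ∀ b ∈ B, U b = 1) :
    0 < capMass G p U := by
  rcases lt_or_ge 0 (capMass G p U) with h | h
  · exact h
  exfalso
  have hzero : capMass G p U = 0 := le_antisymm h (capMass_nonneg G p U)
  have hterm : ∀ e ∈ Finset.univ (α := Sym2 V),
      (if e ∈ G.edgeSet then ediff U e ^ p else 0) = 0 := by
    rw [← Finset.sum_eq_zero_iff_of_nonneg]
    · exact hzero
    · intro e _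
      split
      · exact Real.rpow_nonneg (ediff_nonneg U e) p
      · exact le_rfl
  have hadjeq : ∀ x y, G.Adj x y → U x = U y := by
    intro x y hxy
    have h1 := hterm s(x, y) (Finset.mem_univ _)
    rw [if_pos (G.mem_edgeSet.mpr hxy), ediff_mk] at h1
    have h2 : |U x - U y| = 0 := by
      have := (Real.rpow_eq_zero (abs_nonneg _) (by positivity)).mp h1
      exact this
    exact sub_eq_zero.mp (abs_eq_zero.mp h2)
  have hwalk : ∀ {u v : V}, G.Walk u v → U u = U v := by
    intro u v w
    induction w with
    | nil => rfl
    | @cons a b c hadj w ih => rw [hadjeq a b hadj]; exact ih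
  obtain ⟨a, ha⟩ := hA
  obtain ⟨b, hb⟩ := hB
  obtain ⟨w⟩ := hG.preconnected a b
  have : (0:ℝ) = 1 := by rw [← hU0 a ha, ← hU1 b hb]; exact hwalk w
  norm_num at this

lemma harmonic {p : ℝ} (hp : 1 < p) {A B : Finset V} (U : V → ℝ)
    (hU0 : ∀ a ∈ A, U a = 0) (hU1 : ∀ b ∈ B, U b = 1)
    (hUmin : capMass G p U = CapE G p A B) {x : V} (hxA : x ∉ A) (hxB : x ∉ B) :
    (∑ v : V, if G.Adj x v then Real.sign (U x - U v) * |U x - U v| ^ (p - 1) else 0)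
      = 0 := by
  classical
  set ind : V → ℝ := fun z => if z = x then (1:ℝ) else 0 with hind
  set φ : ℝ → ℝ := fun t => (1/2) * ∑ u : V, ∑ v : V,
    (if G.Adj u v then |(U u - U v) + (ind u - ind v) * t| ^ p else 0) with hφ
  have hφcap : ∀ t, φ t = capMass G p (fun z => U z + t * ind z) := by
    intro t
    have h := sum_pairs G (fun e => ediff (fun z => U z + t * ind z) e ^ p)
    have h2 : ∑ u : V, ∑ v : V,
        (if G.Adj u v then |(U u - U v) + (ind u - ind v) * t| ^ p else 0)
        = ∑ u : V, ∑ v : V, (if G.Adj u v then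
            ediff (fun z => U z + t * ind z) s(u, v) ^ p else 0) := by
      refine Finset.sum_congr rfl fun u _ => Finset.sum_congr rfl fun v _ => ?_
      by_cases hadj : G.Adj u v
      · simp only [if_pos hadj, ediff_mk]
        congr 2
        ring
      · simp [hadj]
    rw [hφ]
    dsimp only
    rw [h2, h]
    rw [capMass]
    ring
  have hglob : ∀ t, φ 0 ≤ φ t := by
    intro t
    have h0 : φ 0 = capMass G p U := by
      rw [hφcap 0]
      congr 1
      funext z
      simp
    have ht : CapE G p A B ≤ φ t := by
      rw [hφcap t]
      refine csInf_le (capE_bddBelow G p A B) ⟨_, ?_, ?_, rfl⟩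
      · intro a ha
        have hax : a ≠ x := fun h => hxA (h ▸ ha)
        simp [hind, hax, hU0 a ha]
      · intro b hb
        have hbx : b ≠ x := fun h => hxB (h ▸ hb)
        simp [hind, hbx, hU1 b hb]
    rw [h0, hUmin]
    exact ht
  have hmin : IsLocalMin φ 0 := Filter.Eventually.of_forall hglob
  set D : V → V → ℝ := fun u v => if G.Adj u v then
    p * Real.sign (U u - U v) * |U u - U v| ^ (p - 1) * (ind u - ind v) else 0 with hD
  have hderiv : HasDerivAt φ ((1/2) * ∑ u : V, ∑ v : V, D u v) 0 := by
    refine HasDerivAt.const_mul _ ?_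
    refine HasDerivAt.fun_sum (fun u _ => ?_)
    refine HasDerivAt.fun_sum (fun v _ => ?_)
    by_cases hadj : G.Adj u v
    · simp only [hD, if_pos hadj]
      exact myDerivAffine hp (U u - U v) (ind u - ind v)
    · simp only [hD, if_neg hadj]
      exact hasDerivAt_const 0 0
  have hzero : (1/2) * ∑ u : V, ∑ v : V, D u v = 0 :=
    hmin.hasDerivAt_eq_zero hderiv
  set g : V → ℝ := fun v => if G.Adj x v then
    Real.sign (U x - U v) * |U x - U v| ^ (p - 1) else 0 with hg
  have hpt : ∀ u v, D u v = p * ((if u = x then g v else 0) + (if v = x then g u else 0)) := by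
    intro u v
    by_cases hu : u = x <;> by_cases hv : v = x
    · simp [hD, hg, hu, hv, SimpleGraph.irrefl]
    · simp only [hD, hg, hind, hu, hv, if_pos rfl, if_neg hv, if_true, if_false]
      by_cases hadj : G.Adj x v
      · simp only [if_pos hadj]; ring
      · simp [hadj]
    · simp only [hD, hg, hind, hu, hv, if_pos rfl, if_neg hu, if_true, if_false]
      by_cases hadj : G.Adj u x
      · have hadj' : G.Adj x u := hadj.symm
        simp only [if_pos hadj, if_pos hadj']
        have hs : Real.sign (U u - U x) = - Real.sign (U x - U u) := by
          rw [← Real.sign_neg]; congr 1; ring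
        rw [hs, abs_sub_comm (U u) (U x)]
        ring
      · have hadj' : ¬ G.Adj x u := fun h => hadj h.symm
        simp [hadj, hadj']
    · simp only [hD, hg, hind, if_neg hu, if_neg hv]
      simp
  have e1 : ∑ u : V, ∑ v : V, (if u = x then g v else 0) = ∑ v : V, g v := by
    have h1 : ∀ u : V, (∑ v : V, (if u = x then g v else 0))
        = if u = x then ∑ v : V, g v else 0 := by
      intro u; split <;> simp
    rw [Finset.sum_congr rfl fun u _ => h1 u]
    simp
  have e2 : ∑ u : V, ∑ v : V, (if v = x then g u else 0) = ∑ u : V, g u := by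
    refine Finset.sum_congr rfl fun u _ => ?_
    simp
  have hsum : ∑ u : V, ∑ v : V, D u v = p * (2 * ∑ v : V, g v) := by
    have h3 : ∑ u : V, ∑ v : V, D u v
        = ∑ u : V, ∑ v : V,
          (p * (if u = x then g v else 0) + p * (if v = x then g u else 0)) := by
      refine Finset.sum_congr rfl fun u _ => Finset.sum_congr rfl fun v _ => ?_
      rw [hpt u v]; ring
    rw [h3]
    simp only [Finset.sum_add_distrib, ← Finset.mul_sum]
    rw [e1, e2]
    ring
  rw [hsum] at hzero
  have hp0 : p ≠ 0 := by positivity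
  have : ∑ v : V, g v = 0 := by
    have h2 : (1/2) * (p * (2 * ∑ v : V, g v)) = p * ∑ v : V, g v := by ring
    rw [h2] at hzero
    exact (mul_eq_zero.mp hzero).resolve_left hp0
  exact this

lemma pairing {A B : Finset V} (hAB : Disjoint A B) (U : V → ℝ)
    (hU0 : ∀ a ∈ A, U a = 0) (hU1 : ∀ b ∈ B, U b = 1)
    (F' : V → V → ℝ) (hF : IsFlow G A B F') :
    ∑ u : V, ∑ v : V, (U v - U u) * F' u v = 2 * totalFlow A F' := by
  obtain ⟨hanti, hsupp, hdiv⟩ := hF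
  set D : V → ℝ := fun u => ∑ v : V, F' u v with hDdef
  have hD0 : ∀ u, u ∉ A → u ∉ B → D u = 0 := fun u h1 h2 => hdiv u h1 h2
  have hswap : ∑ u : V, ∑ v : V, U v * F' u v = - ∑ u : V, ∑ v : V, U u * F' u v := by
    rw [Finset.sum_comm]
    rw [← Finset.sum_neg_distrib]
    refine Finset.sum_congr rfl fun u _ => ?_
    rw [← Finset.sum_neg_distrib]
    refine Finset.sum_congr rfl fun v _ => ?_
    rw [hanti v u]; ring
  have hY : ∑ u : V, ∑ v : V, U u * F' u v = ∑ u : V, U u * D u := by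
    refine Finset.sum_congr rfl fun u _ => ?_
    rw [Finset.mul_sum]
  have hYB : ∑ u : V, U u * D u = ∑ u : V, (if u ∈ B then D u else 0) := by
    refine Finset.sum_congr rfl fun u _ => ?_
    by_cases huA : u ∈ A
    · have huB : u ∉ B := Finset.disjoint_left.mp hAB huA
      rw [if_neg huB, hU0 u huA, zero_mul]
    · by_cases huB : u ∈ B
      · rw [if_pos huB, hU1 u huB, one_mul]
      · rw [if_neg huB, hD0 u huA huB, mul_zero]
  have htot0 : ∑ u : V, D u = 0 := by
    show ∑ u : V, ∑ v : V, F' u v = 0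
    have h1 : ∑ u : V, ∑ v : V, F' u v = - ∑ u : V, ∑ v : V, F' u v := by
      nth_rewrite 1 [Finset.sum_comm]
      rw [← Finset.sum_neg_distrib]
      refine Finset.sum_congr rfl fun u _ => ?_
      rw [← Finset.sum_neg_distrib]
      refine Finset.sum_congr rfl fun v _ => ?_
      rw [hanti v u]
    linarith
  have hsplit : ∑ u : V, D u
      = ∑ u : V, ((if u ∈ A then D u else 0) + (if u ∈ B then D u else 0)) := by
    refine Finset.sum_congr rfl fun u _ => ?_
    by_cases huA : u ∈ A
    · have huB : u ∉ B := Finset.disjoint_left.mp hAB huA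
      rw [if_pos huA, if_neg huB, add_zero]
    · by_cases huB : u ∈ B
      · rw [if_neg huA, if_pos huB, zero_add]
      · rw [if_neg huA, if_neg huB, hD0 u huA huB, add_zero]
  have hTA : totalFlow A F' = ∑ u : V, (if u ∈ A then D u else 0) := by
    rw [totalFlow, Finset.sum_ite_mem, Finset.univ_inter]
  have hTB : ∑ u : V, (if u ∈ B then D u else 0) = - totalFlow A F' := by
    rw [Finset.sum_add_distrib] at hsplit
    rw [hTA]
    linarith [htot0, hsplit]
  calc ∑ u : V, ∑ v : V, (U v - U u) * F' u v
      = ∑ u : V, ∑ v : V, (U v * F' u v - U u * F' u v) := by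
        refine Finset.sum_congr rfl fun u _ => Finset.sum_congr rfl fun v _ => by ring
    _ = (∑ u : V, ∑ v : V, U v * F' u v) - ∑ u : V, ∑ v : V, U u * F' u v := by
        rw [← Finset.sum_sub_distrib]
        refine Finset.sum_congr rfl fun u _ => ?_
        rw [← Finset.sum_sub_distrib]
    _ = - 2 * ∑ u : V, ∑ v : V, U u * F' u v := by rw [hswap]; ring
    _ = - 2 * (- totalFlow A F') := by rw [hY, hYB, hTB]
    _ = 2 * totalFlow A F' := by ring

lemma flow_isFlow {p : ℝ} (hp : 1 < p) {A B : Finset V} (U : V → ℝ)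
    (hU0 : ∀ a ∈ A, U a = 0) (hU1 : ∀ b ∈ B, U b = 1)
    (hUmin : capMass G p U = CapE G p A B) (c : ℝ) :
    IsFlow G A B (fun x y => if G.Adj x y then
      c * (Real.sign (U y - U x) * |U y - U x| ^ (p - 1)) else 0) := by
  refine ⟨?_, ?_, ?_⟩
  · intro x y
    beta_reduce
    by_cases hadj : G.Adj x y
    · have hadj' : G.Adj y x := hadj.symm
      rw [if_pos hadj, if_pos hadj']
      have hs : Real.sign (U y - U x) = - Real.sign (U x - U y) := by
        rw [← Real.sign_neg]; congr 1; ring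
      rw [hs, abs_sub_comm (U y) (U x)]
      ring
    · have hadj' : ¬ G.Adj y x := fun h => hadj h.symm
      rw [if_neg hadj, if_neg hadj']
      ring
  · intro x y hadj
    beta_reduce
    rw [if_neg hadj]
  · intro x hxA hxB
    beta_reduce
    have hh := harmonic hp U hU0 hU1 hUmin hxA hxB
    have h1 : ∀ y : V, (if G.Adj x y then
        c * (Real.sign (U y - U x) * |U y - U x| ^ (p - 1)) else 0)
        = (-c) * (if G.Adj x y then
            Real.sign (U x - U y) * |U x - U y| ^ (p - 1) else 0) := by
      intro y
      by_cases hadj : G.Adj x y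
      · rw [if_pos hadj, if_pos hadj]
        have hs : Real.sign (U y - U x) = - Real.sign (U x - U y) := by
          rw [← Real.sign_neg]; congr 1; ring
        rw [hs, abs_sub_comm (U y) (U x)]
        ring
      · rw [if_neg hadj, if_neg hadj, mul_zero]
    calc ∑ y : V, (if G.Adj x y then
            c * (Real.sign (U y - U x) * |U y - U x| ^ (p - 1)) else 0)
        = ∑ y : V, (-c) * (if G.Adj x y then
            Real.sign (U x - U y) * |U x - U y| ^ (p - 1) else 0) :=
          Finset.sum_congr rfl fun y _ => h1 y
      _ = (-c) * ∑ y : V, (if G.Adj x y then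
            Real.sign (U x - U y) * |U x - U y| ^ (p - 1) else 0) := by
          rw [Finset.mul_sum]
      _ = 0 := by rw [hh, mul_zero]

lemma pairing_value {p : ℝ} (hp : 1 < p) (U : V → ℝ) (c : ℝ) :
    ∑ u : V, ∑ v : V, (U v - U u) * (if G.Adj u v then
        c * (Real.sign (U v - U u) * |U v - U u| ^ (p - 1)) else 0)
      = c * (2 * capMass G p U) := by
  have hpt : ∀ u v : V, (U v - U u) * (if G.Adj u v then
      c * (Real.sign (U v - U u) * |U v - U u| ^ (p - 1)) else 0)
      = c * (if G.Adj u v then ediff U s(u, v) ^ p else 0) := by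
    intro u v
    by_cases hadj : G.Adj u v
    · rw [if_pos hadj, if_pos hadj, ediff_mk, abs_sub_comm (U u) (U v)]
      have h1 : (U v - U u) * (c * (Real.sign (U v - U u) * |U v - U u| ^ (p - 1)))
          = c * (((U v - U u) * Real.sign (U v - U u)) * |U v - U u| ^ (p - 1)) := by ring
      rw [h1, rsign_mul_abs, abs_mul_abs_rpow _ (by linarith : (0:ℝ) < p - 1)]
      norm_num
    · rw [if_neg hadj, if_neg hadj, mul_zero, mul_zero]
  calc ∑ u : V, ∑ v : V, (U v - U u) * (if G.Adj u v then
          c * (Real.sign (U v - U u) * |U v - U u| ^ (p - 1)) else 0)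
      = ∑ u : V, ∑ v : V, c * (if G.Adj u v then ediff U s(u, v) ^ p else 0) :=
        Finset.sum_congr rfl fun u _ => Finset.sum_congr rfl fun v _ => hpt u v
    _ = c * ∑ u : V, ∑ v : V, (if G.Adj u v then ediff U s(u, v) ^ p else 0) := by
        simp only [← Finset.mul_sum]
    _ = c * (2 * capMass G p U) := by
        rw [sum_pairs G (fun e => ediff U e ^ p)]
        rfl

lemma conj_exp {p q : ℝ} (hp : 1 < p) (hpq : 1 / p + 1 / q = 1) :
    p.HolderConjugate q := Real.holderConjugate_iff.mpr ⟨hp, by simpa [one_div] using hpq⟩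

lemma energy_eval {p q : ℝ} (hp : 1 < p) (hpq : 1 / p + 1 / q = 1) (U : V → ℝ)
    {c : ℝ} (hc : 0 ≤ c) :
    energyQ G q (fun x y => if G.Adj x y then
      c * (Real.sign (U y - U x) * |U y - U x| ^ (p - 1)) else 0)
      = c ^ q * capMass G p U := by
  have hconj := conj_exp hp hpq
  have hq0 : (0:ℝ) ≤ q := hconj.symm.nonneg
  have hkey : ∀ e ∈ G.edgeSet, flowAbs (fun x y => if G.Adj x y then
      c * (Real.sign (U y - U x) * |U y - U x| ^ (p - 1)) else 0) e ^ q
      = c ^ q * ediff U e ^ p := by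
    intro e he
    revert he
    refine Sym2.ind (fun u v he => ?_) e
    rw [SimpleGraph.mem_edgeSet] at he
    rw [flowAbs_mk]
    beta_reduce
    rw [if_pos he, if_pos he.symm]
    have h1 : |c * (Real.sign (U v - U u) * |U v - U u| ^ (p - 1))|
        = c * |U v - U u| ^ (p - 1) := by
      rw [abs_mul, abs_of_nonneg hc, abs_sign_mul (by linarith : p - 1 ≠ 0)]
    have h2 : |c * (Real.sign (U u - U v) * |U u - U v| ^ (p - 1))|
        = c * |U v - U u| ^ (p - 1) := by
      rw [abs_mul, abs_of_nonneg hc, abs_sign_mul (by linarith : p - 1 ≠ 0),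
        abs_sub_comm (U u) (U v)]
    rw [h1, h2, max_self]
    rw [Real.mul_rpow hc (Real.rpow_nonneg (abs_nonneg _) _)]
    congr 1
    rw [← Real.rpow_mul (abs_nonneg _), hconj.sub_one_mul_conj, ediff_mk,
      abs_sub_comm (U u) (U v)]
  calc energyQ G q (fun x y => if G.Adj x y then
        c * (Real.sign (U y - U x) * |U y - U x| ^ (p - 1)) else 0)
      = ∑ e : Sym2 V, (if e ∈ G.edgeSet then c ^ q * ediff U e ^ p else 0) := by
        refine Finset.sum_congr rfl fun e _ => ?_
        by_cases he : e ∈ G.edgeSet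
        · rw [if_pos he, if_pos he, hkey e he]
        · rw [if_neg he, if_neg he]
    _ = c ^ q * capMass G p U := by
        rw [capMass, Finset.mul_sum]
        refine Finset.sum_congr rfl fun e _ => ?_
        by_cases he : e ∈ G.edgeSet
        · rw [if_pos he, if_pos he]
        · rw [if_neg he, if_neg he, mul_zero]

lemma energyQ_nonneg (G : SimpleGraph V) {q : ℝ} (hq : 0 ≤ q) (F' : V → V → ℝ) :
    0 ≤ energyQ G q F' := by
  refine Finset.sum_nonneg fun e _ => ?_
  have h0 : 0 ≤ flowAbs F' e :=
    Sym2.ind (fun x y => le_trans (abs_nonneg _) (le_max_left _ _)) e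
  split
  · exact Real.rpow_nonneg h0 q
  · exact le_rfl

lemma energy_lower_bound (hG : G.Connected) {p q : ℝ} (hp : 1 < p)
    (hpq : 1 / p + 1 / q = 1) {A B : Finset V}
    (hA : A.Nonempty) (hB : B.Nonempty) (hAB : Disjoint A B) (U : V → ℝ)
    (hU0 : ∀ a ∈ A, U a = 0) (hU1 : ∀ b ∈ B, U b = 1)
    (F' : V → V → ℝ) (hF' : IsFlow G A B F') (hTF : totalFlow A F' = 1) :
    ((capMass G p U)⁻¹) ^ q * capMass G p U ≤ energyQ G q F' := by
  have hconj := conj_exp hp hpq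
  have hq1 : 1 < q := hconj.symm.lt
  have hq0 : (0:ℝ) < q := hconj.symm.pos
  set M := capMass G p U with hM
  have hMpos : 0 < M := capMass_pos hG hp hA hB hAB U hU0 hU1
  have hpair : ∑ u : V, ∑ v : V, (U v - U u) * F' u v = 2 := by
    rw [pairing hAB U hU0 hU1 F' hF', hTF]; norm_num
  set f : V × V → ℝ := fun w => if G.Adj w.1 w.2 then |U w.2 - U w.1| else 0 with hf
  set g : V × V → ℝ := fun w => if G.Adj w.1 w.2 then |F' w.1 w.2| else 0 with hg
  have hfg : (2:ℝ) ≤ ∑ w : V × V, f w * g w := by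
    rw [← hpair, Fintype.sum_prod_type]
    refine Finset.sum_le_sum fun u _ => Finset.sum_le_sum fun v _ => ?_
    simp only [hf, hg]
    by_cases hadj : G.Adj u v
    · rw [if_pos hadj, if_pos hadj, ← abs_mul]
      exact le_abs_self _
    · rw [if_neg hadj, if_neg hadj, hF'.2.1 u v hadj]
      norm_num
  have hsumf : ∑ w : V × V, |f w| ^ p = 2 * M := by
    have h1 : ∀ w : V × V, |f w| ^ p = if G.Adj w.1 w.2 then ediff U s(w.1, w.2) ^ p else 0 := by
      intro w
      simp only [hf]
      by_cases hadj : G.Adj w.1 w.2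
      · rw [if_pos hadj, if_pos hadj, abs_abs, ediff_mk, abs_sub_comm (U w.1) (U w.2)]
      · rw [if_neg hadj, if_neg hadj, abs_zero, Real.zero_rpow (by positivity)]
    rw [Finset.sum_congr rfl fun w _ => h1 w]
    rw [Fintype.sum_prod_type]
    rw [sum_pairs G (fun e => ediff U e ^ p)]
    rfl
  have hsumg : ∑ w : V × V, |g w| ^ q ≤ 2 * energyQ G q F' := by
    have h1 : ∀ w : V × V, |g w| ^ q ≤ if G.Adj w.1 w.2 then flowAbs F' s(w.1, w.2) ^ q else 0 := by
      intro w
      simp only [hg]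
      by_cases hadj : G.Adj w.1 w.2
      · rw [if_pos hadj, if_pos hadj, abs_abs, flowAbs_mk]
        exact Real.rpow_le_rpow (abs_nonneg _) (le_max_left _ _) hq0.le
      · rw [if_neg hadj, if_neg hadj, abs_zero, Real.zero_rpow (by positivity)]
    refine le_trans (Finset.sum_le_sum fun w _ => h1 w) ?_
    rw [Fintype.sum_prod_type, sum_pairs G (fun e => flowAbs F' e ^ q)]
    rfl
  have hholder := Real.inner_le_Lp_mul_Lq Finset.univ f g hconj
  have hE0 : 0 ≤ energyQ G q F' := energyQ_nonneg G hq0.le F'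
  have hstep : (2:ℝ) ≤ (2 * M) ^ (1/p) * (2 * energyQ G q F') ^ (1/q) := by
    refine le_trans hfg (le_trans hholder ?_)
    rw [hsumf]
    refine mul_le_mul_of_nonneg_left ?_ (Real.rpow_nonneg (by positivity) _)
    exact Real.rpow_le_rpow (Finset.sum_nonneg fun w _ => Real.rpow_nonneg (abs_nonneg _) q)
      hsumg (by positivity)
  have hfactor : (2 * M) ^ (1/p) * (2 * energyQ G q F') ^ (1/q)
      = 2 * (M ^ (1/p) * energyQ G q F' ^ (1/q)) := by
    rw [Real.mul_rpow (by norm_num) hMpos.le, Real.mul_rpow (by norm_num) hE0]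
    have h2 : (2:ℝ) ^ (1/p) * (2:ℝ) ^ (1/q) = 2 := by
      rw [← Real.rpow_add (by norm_num), hpq, Real.rpow_one]
    calc (2:ℝ) ^ (1/p) * M ^ (1/p) * ((2:ℝ) ^ (1/q) * energyQ G q F' ^ (1/q))
        = ((2:ℝ) ^ (1/p) * (2:ℝ) ^ (1/q)) * (M ^ (1/p) * energyQ G q F' ^ (1/q)) := by ring
      _ = 2 * (M ^ (1/p) * energyQ G q F' ^ (1/q)) := by rw [h2]
  have hone : (1:ℝ) ≤ M ^ (1/p) * energyQ G q F' ^ (1/q) := by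
    rw [hfactor] at hstep
    linarith
  -- raise to the q-th power
  have hqpow : (1:ℝ) ≤ M ^ (q/p) * energyQ G q F' := by
    have h1 := Real.rpow_le_rpow (by norm_num) hone hq0.le
    rw [Real.one_rpow] at h1
    rw [Real.mul_rpow (Real.rpow_nonneg hMpos.le _) (Real.rpow_nonneg hE0 _)] at h1
    rw [← Real.rpow_mul hMpos.le, ← Real.rpow_mul hE0] at h1
    have hq' : 1/q * q = 1 := by field_simp
    have hp' : 1/p * q = q/p := by ring
    rw [hq', hp', Real.rpow_one] at h1
    exact h1
  have hqp_eq : q / p = q - 1 := by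
    have h1 : (p - 1) * q = p := hconj.sub_one_mul_conj
    have hp0 : p ≠ 0 := hconj.ne_zero
    field_simp
    nlinarith [h1]
  have hfinal : (M ^ (q/p))⁻¹ ≤ energyQ G q F' := by
    have hMq : 0 < M ^ (q/p) := Real.rpow_pos_of_pos hMpos _
    have h2 := mul_le_mul_of_nonneg_left hqpow (le_of_lt (inv_pos.mpr hMq))
    rw [mul_one, ← mul_assoc, inv_mul_cancel₀ hMq.ne', one_mul] at h2
    exact h2
  have hval : ((M)⁻¹) ^ q * M = (M ^ (q/p))⁻¹ := by
    rw [hqp_eq, Real.inv_rpow hMpos.le, ← Real.rpow_neg hMpos.le,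
      ← Real.rpow_add_one hMpos.ne' (-q), ← Real.rpow_neg hMpos.le]
    congr 1
    ring
  rw [hval]
  exact hfinal
end OhmAux
open Paper in
/-- Discrete Ohm's law: if `Û` is the capacity-minimizing potential
(`Û = 0` on `A`, `Û = 1` on `B`, achieving `Cap_p(A,B,G)`), then the optimal
`Θ(A,B)`-admissible density is `ρ̂({x,y}) = |Û(x) − Û(y)|` and the energy-minimizing
unit flow is `F(x,y) = Mod_p(Θ(A,B),G)⁻¹ · sgn(Û(y)−Û(x))·|Û(y)−Û(x)|^{p−1}`. -/
theorem statement5 {V : Type*} [Fintype V] [DecidableEq V] (G : SimpleGraph V)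
    (hG : G.Connected) (p q : ℝ) (hp : 1 < p) (hpq : 1 / p + 1 / q = 1)
    (A B : Finset V) (hA : A.Nonempty) (hB : B.Nonempty) (hAB : Disjoint A B)
    (U : V → ℝ) (hU0 : ∀ a ∈ A, U a = 0) (hU1 : ∀ b ∈ B, U b = 1)
    (hUmin : capMass G p U = CapE G p A B) :
    IsOptDensityE G p (pathsBetween G (↑A : Set V) (↑B : Set V))
        (fun e => if e ∈ G.edgeSet then ediff U e else 0) ∧
      (IsFlow G A B
          (fun x y => if G.Adj x y then
            (ModE G p (pathsBetween G (↑A : Set V) (↑B : Set V)))⁻¹ *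
              (Real.sign (U y - U x) * |U y - U x| ^ (p - 1)) else 0) ∧
        totalFlow A
          (fun x y => if G.Adj x y then
            (ModE G p (pathsBetween G (↑A : Set V) (↑B : Set V)))⁻¹ *
              (Real.sign (U y - U x) * |U y - U x| ^ (p - 1)) else 0) = 1 ∧
        energyQ G q
          (fun x y => if G.Adj x y then
            (ModE G p (pathsBetween G (↑A : Set V) (↑B : Set V)))⁻¹ *
              (Real.sign (U y - U x) * |U y - U x| ^ (p - 1)) else 0) = EminQ G q A B ∧
        ∀ F' : V → V → ℝ, IsFlow G A B F' → totalFlow A F' = 1 →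
          energyQ G q
            (fun x y => if G.Adj x y then
              (ModE G p (pathsBetween G (↑A : Set V) (↑B : Set V)))⁻¹ *
                (Real.sign (U y - U x) * |U y - U x| ^ (p - 1)) else 0) ≤
            energyQ G q F') := by
  
  classical
  have hMod : ModE G p (pathsBetween G (↑A : Set V) (↑B : Set V)) = capMass G p U :=
    OhmAux.modE_eq hG hp hA U hU0 hU1 hUmin
  have hMpos : 0 < capMass G p U :=
    OhmAux.capMass_pos hG hp hA hB hAB U hU0 hU1
  have hModPos : 0 < ModE G p (pathsBetween G (↑A : Set V) (↑B : Set V)) := by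
    rw [hMod]; exact hMpos
  set c : ℝ := (ModE G p (pathsBetween G (↑A : Set V) (↑B : Set V)))⁻¹ with hc
  have hc0 : 0 ≤ c := inv_nonneg.mpr hModPos.le
  constructor
  · -- optimal density
    refine ⟨⟨fun e => ?_, fun e he => ?_⟩, OhmAux.rhohat_admissible U hU0 hU1, ?_⟩
    · by_cases h : e ∈ G.edgeSet <;> simp [h, OhmAux.ediff_nonneg U e]
    · simp [he]
    · intro σ _ hσa
      rw [OhmAux.massE_rhohat G p U, hUmin]
      exact OhmAux.lower_bound_capE hG hp hA σ hσa
  · have hflow : IsFlow G A B (fun x y => if G.Adj x y then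
        c * (Real.sign (U y - U x) * |U y - U x| ^ (p - 1)) else 0) :=
      OhmAux.flow_isFlow hp U hU0 hU1 hUmin c
    have htf : totalFlow A (fun x y => if G.Adj x y then
        c * (Real.sign (U y - U x) * |U y - U x| ^ (p - 1)) else 0) = 1 := by
      have h1 := (OhmAux.pairing hAB U hU0 hU1 _ hflow).symm.trans
        (OhmAux.pairing_value hp U c)
      have h2 : c * (2 * capMass G p U) = 2 := by
        rw [hc, hMod]
        field_simp
      rw [h2] at h1
      linarith
    have hEval : energyQ G q (fun x y => if G.Adj x y then
        c * (Real.sign (U y - U x) * |U y - U x| ^ (p - 1)) else 0)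
        = ((capMass G p U)⁻¹) ^ q * capMass G p U := by
      rw [OhmAux.energy_eval hp hpq U hc0, hc, hMod]
    refine ⟨hflow, htf, ?_, ?_⟩
    · -- energyQ = EminQ
      have hbdd : BddBelow {m | ∃ F, IsFlow G A B F ∧ totalFlow A F = 1 ∧
          energyQ G q F = m} := by
        refine ⟨((capMass G p U)⁻¹) ^ q * capMass G p U, ?_⟩
        rintro m ⟨F'', h1, h2, rfl⟩
        exact OhmAux.energy_lower_bound hG hp hpq hA hB hAB U hU0 hU1 F'' h1 h2
      have hmem : energyQ G q (fun x y => if G.Adj x y then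
          c * (Real.sign (U y - U x) * |U y - U x| ^ (p - 1)) else 0)
          ∈ {m | ∃ F, IsFlow G A B F ∧ totalFlow A F = 1 ∧ energyQ G q F = m} :=
        ⟨_, hflow, htf, rfl⟩
      refine le_antisymm ?_ (csInf_le hbdd hmem)
      refine le_csInf ⟨_, hmem⟩ ?_
      rintro m ⟨F'', h1, h2, rfl⟩
      rw [hEval]
      exact OhmAux.energy_lower_bound hG hp hpq hA hB hAB U hU0 hU1 F'' h1 h2
    · intro F' h1 h2
      rw [hEval]
      exact OhmAux.energy_lower_bound hG hp hpq hA hB hAB U hU0 hU1 F' h1 h2
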